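/- For every real number w > 0, one has e^{−w} I₀(w) > 1/√(2πw) − 2/(π²w). Consequently, for every w > 32/π³ one has e^{−w} I₀(w) > 1/(2√(2πw)). -/

import Mathlib

set_option maxHeartbeats 1000000


open Real

/-- The modified Bessel function of the first kind of order zero,
`I0(w) = sum_k w^(2k) / (4^k (k!)^2)`. -/
noncomputable def besselI0 (w : ℝ) : ℝ :=
  ∑' k : ℕ, w ^ (2 * k) / (4 ^ k * (k.factorial : ℝ) ^ 2)

/-- The modified Bessel function of the first kind of order one (the derivative of `besselI0`),
`I1(w) = sum_k w^(2k+1) / (2^(2k+1) k! (k+1)!)`. -/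
noncomputable def besselI1 (w : ℝ) : ℝ :=
  ∑' k : ℕ, w ^ (2 * k + 1) / (2 ^ (2 * k + 1) * (k.factorial : ℝ) * ((k + 1).factorial : ℝ))

namespace BesselAux
open MeasureTheory Set Filter intervalIntegral

lemma exp_eq_tsum_div' (y : ℝ) : Real.exp y = ∑' n : ℕ, y ^ n / n.factorial := by
  rw [Real.exp_eq_exp_ℝ, NormedSpace.exp_eq_tsum_div]

lemma integral_cos_pow_even' (n : ℕ) :
    ∫ x in (0:ℝ)..π, Real.cos x ^ (2 * n)
      = π * ((2 * n).factorial / (4 ^ n * (n.factorial : ℝ) ^ 2)) := by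
  induction n with
  | zero => simp
  | succ k ih =>
    have h2 : 2 * (k + 1) = 2 * k + 2 := by ring
    rw [h2, integral_cos_pow, ih, Real.sin_pi, Real.sin_zero]
    have h1 : ((2 * k + 2).factorial : ℝ)
        = (2 * (k:ℝ) + 2) * (2 * (k:ℝ) + 1) * ((2 * k).factorial : ℝ) := by
      rw [show 2 * k + 2 = (2 * k + 1) + 1 by ring, Nat.factorial_succ, Nat.factorial_succ]
      push_cast; ring
    have hh2 : (((k + 1)).factorial : ℝ) = ((k:ℝ) + 1) * (k.factorial : ℝ) := by
      rw [Nat.factorial_succ]; push_cast; ring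
    rw [h1, hh2]
    have hA : (0:ℝ) < ((2 * k).factorial : ℝ) := by positivity
    have hB : (0:ℝ) < (k.factorial : ℝ) := by positivity
    have h4 : (0:ℝ) < (4:ℝ) ^ k := by positivity
    push_cast
    field_simp
    ring

lemma integral_cos_pow_odd' (n : ℕ) :
    ∫ x in (0:ℝ)..π, Real.cos x ^ (2 * n + 1) = 0 := by
  induction n with
  | zero => simp
  | succ k ih =>
    rw [show 2 * (k + 1) + 1 = (2 * k + 1) + 2 by ring, integral_cos_pow, ih]
    simp

lemma summable_besselI0_terms (w : ℝ) :
    Summable (fun n : ℕ => w ^ (2 * n) / (4 ^ n * (n.factorial : ℝ) ^ 2)) := by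
  refine Summable.of_nonneg_of_le (fun n => by rw [pow_mul]; positivity)
    (fun n => ?_) (Real.summable_pow_div_factorial (w ^ 2 / 4))
  have h2 : (1:ℝ) ≤ (n.factorial : ℝ) := by exact_mod_cast n.factorial_pos
  have h3 : (n.factorial : ℝ) ≤ (n.factorial : ℝ) ^ 2 := by nlinarith
  rw [pow_mul, div_pow, div_div]
  gcongr

lemma integral_repr (w : ℝ) :
    ∫ x in (0:ℝ)..π, Real.exp (w * Real.cos x) = π * besselI0 w := by
  have hpi := Real.pi_pos
  rw [intervalIntegral.integral_of_le hpi.le]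
  have hsum : ∀ x : ℝ, Real.exp (w * Real.cos x)
      = ∑' k : ℕ, (w * Real.cos x) ^ k / k.factorial := fun x => exp_eq_tsum_div' _
  simp_rw [hsum]
  rw [MeasureTheory.integral_tsum (fun k => (Continuous.aestronglyMeasurable (by fun_prop))) ?_]
  · have key : ∀ k : ℕ, (∫ x in Ioc (0:ℝ) π, (w * Real.cos x) ^ k / k.factorial)
        = w ^ k / k.factorial * ∫ x in (0:ℝ)..π, Real.cos x ^ k := by
      intro k
      rw [intervalIntegral.integral_of_le hpi.le]
      have hpt : ∀ x : ℝ, (w * Real.cos x) ^ k / k.factorial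
          = w ^ k / k.factorial * Real.cos x ^ k := fun x => by rw [mul_pow]; ring
      simp_rw [hpt]
      rw [MeasureTheory.integral_const_mul]
    simp_rw [key]
    have heven : ∀ n : ℕ,
        w ^ (2 * n) / (2 * n).factorial * ∫ x in (0:ℝ)..π, Real.cos x ^ (2 * n)
          = π * (w ^ (2 * n) / (4 ^ n * (n.factorial : ℝ) ^ 2)) := by
      intro n
      rw [integral_cos_pow_even']
      have hA : (0:ℝ) < ((2 * n).factorial : ℝ) := by positivity
      have hB : (0:ℝ) < (n.factorial : ℝ) := by positivity
      field_simp
    have hodd : ∀ n : ℕ,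
        w ^ (2 * n + 1) / (2 * n + 1).factorial * ∫ x in (0:ℝ)..π, Real.cos x ^ (2 * n + 1)
          = 0 := by
      intro n; rw [integral_cos_pow_odd', mul_zero]
    have hse : Summable (fun n : ℕ =>
        w ^ (2 * n) / (2 * n).factorial * ∫ x in (0:ℝ)..π, Real.cos x ^ (2 * n)) := by
      refine Summable.congr (((summable_besselI0_terms w).mul_left π)) fun n => (heven n).symm
    have hso : Summable (fun n : ℕ =>
        w ^ (2 * n + 1) / (2 * n + 1).factorial * ∫ x in (0:ℝ)..π, Real.cos x ^ (2 * n + 1)) := by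
      refine Summable.congr summable_zero fun n => (hodd n).symm
    rw [← tsum_even_add_odd hse hso]
    simp_rw [heven, hodd, tsum_zero, add_zero, tsum_mul_left]
    rfl
  · -- finiteness of ∑' of lintegrals
    have hb : ∀ (k : ℕ) (x : ℝ),
        (‖(w * Real.cos x) ^ k / (k.factorial : ℝ)‖₊ : ENNReal)
          ≤ ENNReal.ofReal (|w| ^ k / k.factorial) := by
      intro k x
      rw [← Real.enorm_eq_ofReal (by positivity)]
      have : ‖(w * Real.cos x) ^ k / (k.factorial : ℝ)‖ ≤ ‖|w| ^ k / (k.factorial : ℝ)‖ := by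
        rw [Real.norm_eq_abs, Real.norm_eq_abs, abs_div, abs_div, abs_pow, abs_pow, abs_mul,
          abs_abs]
        gcongr
        calc |w| * |Real.cos x| ≤ |w| * 1 := by
              gcongr; exact Real.abs_cos_le_one x
          _ = |w| := mul_one _
      exact_mod_cast (by exact_mod_cast this : ‖(w * Real.cos x) ^ k / (k.factorial : ℝ)‖₊
        ≤ ‖|w| ^ k / (k.factorial : ℝ)‖₊)
    refine LT.lt.ne ?_
    calc ∑' k : ℕ, ∫⁻ x in Ioc (0:ℝ) π, ‖(w * Real.cos x) ^ k / (k.factorial : ℝ)‖₊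
        ≤ ∑' k : ℕ, ENNReal.ofReal (|w| ^ k / k.factorial) * ENNReal.ofReal π := by
          refine ENNReal.tsum_le_tsum fun k => ?_
          calc ∫⁻ x in Ioc (0:ℝ) π, ‖(w * Real.cos x) ^ k / (k.factorial : ℝ)‖₊
              ≤ ∫⁻ _ in Ioc (0:ℝ) π, ENNReal.ofReal (|w| ^ k / k.factorial) :=
                MeasureTheory.lintegral_mono fun x => hb k x
            _ = ENNReal.ofReal (|w| ^ k / k.factorial) * volume (Ioc (0:ℝ) π) :=
                MeasureTheory.setLIntegral_const _ _
            _ = ENNReal.ofReal (|w| ^ k / k.factorial) * ENNReal.ofReal π := by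
                rw [Real.volume_Ioc, sub_zero]
      _ = (∑' k : ℕ, ENNReal.ofReal (|w| ^ k / k.factorial)) * ENNReal.ofReal π :=
          ENNReal.tsum_mul_right
      _ = ENNReal.ofReal (∑' k : ℕ, |w| ^ k / k.factorial) * ENNReal.ofReal π := by
          rw [ENNReal.ofReal_tsum_of_nonneg (fun k => by positivity)
            (Real.summable_pow_div_factorial _)]
      _ < ⊤ := by
          exact ENNReal.mul_lt_top ENNReal.ofReal_lt_top ENNReal.ofReal_lt_top

lemma tail_integral_le (w : ℝ) (hw : 0 < w) :
    (∫ x in Ioi π, Real.exp (-(w/2) * x ^ 2)) ≤ 2 / (π * w) * Real.exp (-(w * π / 2) * π) := by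
  have hpi := Real.pi_pos
  set c : ℝ := w * π / 2 with hc
  have hcpos : 0 < c := by positivity
  have hstep1 : (∫ x in Ioi π, Real.exp (-(w/2) * x ^ 2))
      ≤ ∫ x in Ioi π, Real.exp (-c * x) := by
    refine MeasureTheory.setIntegral_mono_on
      ((integrable_exp_neg_mul_sq (by positivity : (0:ℝ) < w/2)).integrableOn)
      (exp_neg_integrableOn_Ioi π hcpos) measurableSet_Ioi fun x hx => ?_
    have hx' : π < x := hx
    apply Real.exp_le_exp.mpr
    have hxpos : 0 < x := lt_trans hpi hx'
    nlinarith [mul_nonneg (mul_nonneg hw.le hxpos.le) (sub_nonneg.mpr hx'.le)]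
  have hstep2 : (∫ x in Ioi π, Real.exp (-c * x)) = Real.exp (-c * π) / c := by
    have hderiv : ∀ x ∈ Ici π, HasDerivAt (fun y => -(1/c) * Real.exp (-c * y))
        (Real.exp (-c * x)) x := by
      intro x _
      have h1 : HasDerivAt (fun y : ℝ => -c * y) (-c) x := by
        simpa using (hasDerivAt_id x).const_mul (-c)
      have h2 : HasDerivAt (fun y : ℝ => Real.exp (-c * y)) (Real.exp (-c * x) * (-c)) x :=
        (Real.hasDerivAt_exp _).comp x h1
      have h3 := h2.const_mul (-(1/c))
      refine h3.congr_deriv ?_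
      have hcc : c * c⁻¹ = 1 := mul_inv_cancel₀ hcpos.ne'; linear_combination (Real.exp (-c * x)) * hcc
    have htends : Tendsto (fun y : ℝ => -(1/c) * Real.exp (-c * y)) atTop (nhds 0) := by
      have h1 : Tendsto (fun y : ℝ => -c * y) atTop atBot :=
        tendsto_id.const_mul_atTop_of_neg (neg_neg_iff_pos.mpr hcpos)
      have h2 : Tendsto (fun y : ℝ => Real.exp (-c * y)) atTop (nhds 0) :=
        Real.tendsto_exp_atBot.comp h1
      simpa using h2.const_mul (-(1/c))
    have := MeasureTheory.integral_Ioi_of_hasDerivAt_of_tendsto' hderiv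
      (exp_neg_integrableOn_Ioi π hcpos) htends
    rw [this]
    field_simp; ring
  rw [hstep2] at hstep1
  calc (∫ x in Ioi π, Real.exp (-(w/2) * x ^ 2)) ≤ Real.exp (-c * π) / c := hstep1
    _ = 2 / (π * w) * Real.exp (-(w * π / 2) * π) := by
        rw [hc]; field_simp

lemma main_bound (w : ℝ) (hw : 0 < w) :
    Real.exp (-w) * besselI0 w > 1 / Real.sqrt (2 * π * w) - 2 / (π ^ 2 * w) := by
  have hpi := Real.pi_pos
  set s : ℝ := Real.sqrt (2 * π * w) with hs
  have hspos : 0 < s := Real.sqrt_pos.mpr (by positivity)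
  have hsq : s ^ 2 = 2 * π * w := Real.sq_sqrt (by positivity)
  -- representation
  have hEeq : Real.exp (-w) * besselI0 w
      = (1/π) * ∫ x in (0:ℝ)..π, Real.exp (w * Real.cos x - w) := by
    have h1 : (∫ x in (0:ℝ)..π, Real.exp (w * Real.cos x - w))
        = Real.exp (-w) * ∫ x in (0:ℝ)..π, Real.exp (w * Real.cos x) := by
      rw [← intervalIntegral.integral_const_mul]
      congr 1; ext x; rw [← Real.exp_add]; ring_nf
    rw [h1, integral_repr]
    field_simp
  -- pointwise lower bound by a Gaussian
  have hmono : (∫ x in (0:ℝ)..π, Real.exp (-(w/2) * x ^ 2))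
      ≤ ∫ x in (0:ℝ)..π, Real.exp (w * Real.cos x - w) := by
    refine intervalIntegral.integral_mono_on hpi.le
      (Continuous.intervalIntegrable (by fun_prop) _ _)
      (Continuous.intervalIntegrable (by fun_prop) _ _) fun x _ => ?_
    apply Real.exp_le_exp.mpr
    have hcos := Real.one_sub_sq_div_two_le_cos (x := x)
    nlinarith
  -- split the Gaussian integral
  have hint : IntegrableOn (fun x => Real.exp (-(w/2) * x ^ 2)) (Ioi (0:ℝ)) :=
    (integrable_exp_neg_mul_sq (by positivity : (0:ℝ) < w/2)).integrableOn
  have hsplit : (∫ x in Ioi (0:ℝ), Real.exp (-(w/2) * x ^ 2))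
      = (∫ x in (0:ℝ)..π, Real.exp (-(w/2) * x ^ 2))
        + ∫ x in Ioi π, Real.exp (-(w/2) * x ^ 2) := by
    rw [intervalIntegral.integral_of_le hpi.le,
      ← MeasureTheory.setIntegral_union Ioc_disjoint_Ioi_same measurableSet_Ioi
        (hint.mono_set (fun x hx => hx.1))
        (hint.mono_set (fun x hx => lt_trans hpi hx)),
      Ioc_union_Ioi_eq_Ioi hpi.le]
  have hG : (∫ x in Ioi (0:ℝ), Real.exp (-(w/2) * x ^ 2)) = Real.sqrt (π / (w/2)) / 2 :=
    integral_gaussian_Ioi (w/2)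
  have hsqrt : Real.sqrt (π / (w/2)) = 2 * π / s := by
    have h1 : (2 * π / s) ^ 2 = π / (w/2) := by
      rw [div_pow, hsq]
      field_simp
    rw [← h1, Real.sqrt_sq (by positivity)]
  -- tail bound
  have htail := tail_integral_le w hw
  have hexp1 : Real.exp (-(w * π / 2) * π) < 1 := by
    rw [Real.exp_lt_one_iff]
    have : 0 < w * π / 2 * π := by positivity
    linarith
  have htail' : (∫ x in Ioi π, Real.exp (-(w/2) * x ^ 2)) < 2 / (π * w) := by
    calc (∫ x in Ioi π, Real.exp (-(w/2) * x ^ 2))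
        ≤ 2 / (π * w) * Real.exp (-(w * π / 2) * π) := htail
      _ < 2 / (π * w) * 1 := by
          apply mul_lt_mul_of_pos_left hexp1 (by positivity)
      _ = 2 / (π * w) := mul_one _
  -- combine
  have hlow : Real.sqrt (π / (w/2)) / 2 - 2 / (π * w)
      < ∫ x in (0:ℝ)..π, Real.exp (w * Real.cos x - w) := by
    have := hsplit
    linarith
  rw [hEeq]
  have hfinal : 1/π * (Real.sqrt (π / (w/2)) / 2 - 2 / (π * w))
      = 1 / s - 2 / (π ^ 2 * w) := by
    rw [hsqrt]
    field_simp
  calc 1 / s - 2 / (π ^ 2 * w)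
      = 1/π * (Real.sqrt (π / (w/2)) / 2 - 2 / (π * w)) := hfinal.symm
    _ < 1/π * ∫ x in (0:ℝ)..π, Real.exp (w * Real.cos x - w) := by
        apply mul_lt_mul_of_pos_left hlow (by positivity)

end BesselAux

/-- For every `w > 0`, `e^(−w) I0(w) > 1/√(2πw) − 2/(π^2 w)`; consequently, for every
`w > 32/π^3`, `e^(−w) I0(w) > 1/(2√(2πw))`. -/
theorem exp_neg_mul_besselI0_lower_bound :
    (∀ w : ℝ, 0 < w →
      Real.exp (-w) * besselI0 w > 1 / Real.sqrt (2 * Real.pi * w) - 2 / (Real.pi ^ 2 * w)) ∧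
    (∀ w : ℝ, 32 / Real.pi ^ 3 < w →
      Real.exp (-w) * besselI0 w > 1 / (2 * Real.sqrt (2 * Real.pi * w))) := by
  have hpi := Real.pi_pos
  refine ⟨fun w hw => BesselAux.main_bound w hw, fun w hw32 => ?_⟩
  have hw : 0 < w := lt_trans (by positivity) hw32
  have main := BesselAux.main_bound w hw
  set s : ℝ := Real.sqrt (2 * Real.pi * w) with hs
  have hspos : 0 < s := Real.sqrt_pos.mpr (by positivity)
  have h32 : 32 < Real.pi ^ 3 * w := by
    rw [div_lt_iff₀ (by positivity)] at hw32
    linarith [hw32]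
  have hslt : s < Real.pi ^ 2 * w / 4 := by
    rw [hs, Real.sqrt_lt' (by positivity)]
    nlinarith
  have hkey : 2 / (Real.pi ^ 2 * w) < 1 / (2 * s) := by
    rw [div_lt_div_iff₀ (by positivity) (by positivity)]
    nlinarith
  have h2 : 1 / s - 1 / (2 * s) = 1 / (2 * s) := by
    field_simp
    ring
  linarith
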